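/- Let Γ be a simple graph on vertex set [m], I ⊆ [m], J = [m]\I. Let G be the kernel of the composite W_Γ → (Z/2)^m → (Z/2)^J of the abelianization map with the coordinate projection. Then G is the internal semidirect product of the normal closure of W_{Γ_I} in W_Γ (the normal factor) with the commutator subgroup [W_{Γ_J}, W_{Γ_J}] (viewed as a subgroup of W_Γ via the standard inclusion W_{Γ_J} ↪ W_Γ); i.e., the normal closure of W_{Γ_I} is normal in G, the two subgroups intersect trivially, and their product is G. -/

import Mathlib

def racgRels {V : Type} (Γ : SimpleGraph V) : Set (FreeGroup V) :=
  {r | (∃ i, r = FreeGroup.of i * FreeGroup.of i) ∨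
       (∃ i j, Γ.Adj i j ∧
         r = FreeGroup.of i * FreeGroup.of j * (FreeGroup.of i)⁻¹ * (FreeGroup.of j)⁻¹)}

abbrev RACG {V : Type} (Γ : SimpleGraph V) : Type := PresentedGroup (racgRels Γ)

def racgGen {V : Type} (Γ : SimpleGraph V) (i : V) : RACG Γ := PresentedGroup.of i

open scoped Pointwise

/- ### Auxiliary lemmas -/

lemma presented_rel_one {α : Type} {rels : Set (FreeGroup α)} {r : FreeGroup α} (h : r ∈ rels) :
    PresentedGroup.mk rels r = 1 :=
  (QuotientGroup.eq_one_iff r).mpr (Subgroup.subset_normalClosure h)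

lemma racgGen_sq {V : Type} (Γ : SimpleGraph V) (i : V) :
    racgGen Γ i * racgGen Γ i = 1 := by
  have h := presented_rel_one (rels := racgRels Γ)
    (r := FreeGroup.of i * FreeGroup.of i) (Or.inl ⟨i, rfl⟩)
  rw [map_mul] at h
  exact h

lemma racgGen_comm {V : Type} (Γ : SimpleGraph V) {i j : V} (h : Γ.Adj i j) :
    racgGen Γ i * racgGen Γ j * (racgGen Γ i)⁻¹ * (racgGen Γ j)⁻¹ = 1 := by
  have h' := presented_rel_one (rels := racgRels Γ)
    (r := FreeGroup.of i * FreeGroup.of j * (FreeGroup.of i)⁻¹ * (FreeGroup.of j)⁻¹)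
    (Or.inr ⟨i, j, h, rfl⟩)
  rw [map_mul, map_mul, map_mul, map_inv, map_inv] at h'
  exact h'

/-- A homomorphism from `ℤ/2` (multiplicatively) to a monoid, determined by an involution. -/
def zmod2Hom {A : Type*} [Monoid A] (c : A) (hc : c * c = 1) :
    Multiplicative (ZMod 2) →* A where
  toFun x := if Multiplicative.toAdd x = 1 then c else 1
  map_one' := by
    show (if Multiplicative.toAdd (1 : Multiplicative (ZMod 2)) = 1 then c else 1) = 1
    rw [if_neg (by decide)]
  map_mul' a b := by
    have hall : ∀ x : ZMod 2, x = 0 ∨ x = 1 := by decide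
    have hadd : Multiplicative.toAdd (a * b) = Multiplicative.toAdd a + Multiplicative.toAdd b :=
      rfl
    rcases hall (Multiplicative.toAdd a) with h1 | h1 <;>
      rcases hall (Multiplicative.toAdd b) with h2 | h2 <;>
      simp [hadd, h1, h2, hc, show ((0 : ZMod 2) ≠ 1) by decide,
        show ((1 : ZMod 2) + 1 = 0) by decide]

@[simp] lemma zmod2Hom_ofAdd_one {A : Type*} [Monoid A] (c : A) (hc : c * c = 1) :
    zmod2Hom c hc (Multiplicative.ofAdd 1) = c := by
  simp [zmod2Hom]

/-- In a RACG, every element of the kernel of the "mod 2 abelianization" map lies in the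
commutator subgroup. -/
lemma racg_ker_le_commutator {V : Type} [Fintype V] [DecidableEq V] (Γ : SimpleGraph V)
    (φ : RACG Γ →* (V → Multiplicative (ZMod 2)))
    (hφ : ∀ i, φ (racgGen Γ i) = Pi.mulSingle i (Multiplicative.ofAdd (1 : ZMod 2))) :
    φ.ker ≤ commutator (RACG Γ) := by
  intro w hw
  have hsq : ∀ i : V,
      Abelianization.of (racgGen Γ i) * Abelianization.of (racgGen Γ i) = 1 := fun i => by
    rw [← map_mul, racgGen_sq, map_one]
  let ψ : (V → Multiplicative (ZMod 2)) →* Abelianization (RACG Γ) :=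
    MonoidHom.noncommPiCoprod (fun i => zmod2Hom (Abelianization.of (racgGen Γ i)) (hsq i))
      (fun i j _ => fun x y => mul_comm _ _)
  have key : ψ.comp (Abelianization.lift φ) = MonoidHom.id (Abelianization (RACG Γ)) := by
    apply Abelianization.hom_ext
    apply PresentedGroup.ext
    intro i
    simp only [MonoidHom.coe_comp, Function.comp_apply, MonoidHom.id_apply]
    rw [show (PresentedGroup.of i : RACG Γ) = racgGen Γ i from rfl,
      Abelianization.lift_apply_of, hφ i]
    rw [show ψ (Pi.mulSingle i (Multiplicative.ofAdd (1 : ZMod 2))) =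
      zmod2Hom (Abelianization.of (racgGen Γ i)) (hsq i) (Multiplicative.ofAdd 1) from
      MonoidHom.noncommPiCoprod_mulSingle _ _ _]
    simp
  have h1 : Abelianization.of w = 1 := by
    have h2 := DFunLike.congr_fun key (Abelianization.of w)
    simp only [MonoidHom.coe_comp, Function.comp_apply, MonoidHom.id_apply,
      Abelianization.lift_apply_of] at h2
    rw [MonoidHom.mem_ker.mp hw, map_one] at h2
    exact h2.symm
  exact (QuotientGroup.eq_one_iff w).mp h1

open scoped Classical in
/-- The function defining the retraction `W_Γ → W_{Γ_J}`, `J = Iᶜ`. -/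
noncomputable def racgProjFun {m : ℕ} (Γ : SimpleGraph (Fin m)) (I : Set (Fin m)) :
    Fin m → RACG (Γ.induce Iᶜ) :=
  fun i => if h : i ∈ Iᶜ then racgGen (Γ.induce Iᶜ) ⟨i, h⟩ else 1

lemma racgProj_rels {m : ℕ} (Γ : SimpleGraph (Fin m)) (I : Set (Fin m)) :
    ∀ r ∈ racgRels Γ, FreeGroup.lift (racgProjFun Γ I) r = 1 := by
  rintro r (⟨i, rfl⟩ | ⟨i, j, hadj, rfl⟩)
  · rw [map_mul, FreeGroup.lift_apply_of]
    unfold racgProjFun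
    by_cases h : i ∈ Iᶜ
    · rw [dif_pos h]; exact racgGen_sq _ _
    · rw [dif_neg h]; simp
  · rw [map_mul, map_mul, map_mul, map_inv, map_inv, FreeGroup.lift_apply_of, FreeGroup.lift_apply_of]
    unfold racgProjFun
    by_cases hi : i ∈ Iᶜ
    · by_cases hj : j ∈ Iᶜ
      · rw [dif_pos hi, dif_pos hj]
        exact racgGen_comm (Γ.induce Iᶜ) (show Γ.Adj i j from hadj)
      · rw [dif_neg hj]; simp
    · rw [dif_neg hi]; simp

/-- The retraction `W_Γ → W_{Γ_J}` killing the generators in `I`. -/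
noncomputable def racgProj {m : ℕ} (Γ : SimpleGraph (Fin m)) (I : Set (Fin m)) :
    RACG Γ →* RACG (Γ.induce Iᶜ) :=
  PresentedGroup.toGroup (racgProj_rels Γ I)

lemma racgProj_gen {m : ℕ} (Γ : SimpleGraph (Fin m)) (I : Set (Fin m)) (i : Fin m) :
    racgProj Γ I (racgGen Γ i) = racgProjFun Γ I i :=
  PresentedGroup.toGroup.of _

/-- Let `G` be the kernel of the composite of the abelianization map `ab : W_Γ → (ℤ/2)^m`
with the coordinate projection onto `(ℤ/2)^J`, `J = [m] \ I`.  Then `G` is the internal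
semidirect product of the normal closure `N` of the standard parabolic `W_{Γ_I}` with the
commutator subgroup `C = [W_{Γ_J}, W_{Γ_J}]` (included in `W_Γ` via the standard inclusion
`ι`): both lie in `G`, `N` is normal in `G`, `N ⊓ C = ⊥` and `N * C = G`. -/
theorem stmt4 {m : ℕ} (Γ : SimpleGraph (Fin m)) (I : Set (Fin m))
    (ab : RACG Γ →* (Fin m → Multiplicative (ZMod 2)))
    (hab : ∀ i : Fin m, ab (racgGen Γ i) =
      fun j => if j = i then Multiplicative.ofAdd (1 : ZMod 2) else 1)
    (ι : RACG (Γ.induce Iᶜ) →* RACG Γ)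
    (hι : ∀ j : (Iᶜ : Set (Fin m)), ι (racgGen (Γ.induce Iᶜ) j) = racgGen Γ j.val) :
    let proj : (Fin m → Multiplicative (ZMod 2)) →*
        ((Iᶜ : Set (Fin m)) → Multiplicative (ZMod 2)) :=
      { toFun := fun f j => f j.val, map_one' := rfl, map_mul' := fun _ _ => rfl }
    let G : Subgroup (RACG Γ) := (proj.comp ab).ker
    let N : Subgroup (RACG Γ) := Subgroup.normalClosure (racgGen Γ '' I)
    let C : Subgroup (RACG Γ) := (commutator (RACG (Γ.induce Iᶜ))).map ι
    N ≤ G ∧ C ≤ G ∧ (∀ g ∈ G, ∀ n ∈ N, g * n * g⁻¹ ∈ N) ∧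
      N ⊓ C = ⊥ ∧ (N : Set (RACG Γ)) * (C : Set (RACG Γ)) = (G : Set (RACG Γ)) := by
  intro proj G N C
  classical
  haveI : G.Normal := MonoidHom.normal_ker (proj.comp ab)
  haveI hNnormal : N.Normal := Subgroup.normalClosure_normal
  set ρ := racgProj Γ I with hρdef
  -- generator computations for ρ
  have hρ1 : ∀ i ∈ I, ρ (racgGen Γ i) = 1 := by
    intro i hi
    rw [racgProj_gen]
    exact dif_neg (by simp [hi])
  have hρ2 : ∀ (j : Fin m) (hj : j ∈ Iᶜ), ρ (racgGen Γ j) = racgGen (Γ.induce Iᶜ) ⟨j, hj⟩ := by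
    intro j hj
    rw [racgProj_gen]
    exact dif_pos hj
  -- ρ ∘ ι = id
  have hρι : ∀ x, ρ (ι x) = x := by
    have h : ρ.comp ι = MonoidHom.id _ := by
      apply PresentedGroup.ext
      intro j
      show ρ (ι (racgGen (Γ.induce Iᶜ) j)) = racgGen (Γ.induce Iᶜ) j
      rw [hι j, hρ2 j.val j.2]
    intro x
    exact DFunLike.congr_fun h x
  -- generators in I lie in G
  have hIG : ∀ i ∈ I, racgGen Γ i ∈ G := by
    intro i hi
    show (proj.comp ab) (racgGen Γ i) = 1
    rw [MonoidHom.comp_apply, hab i]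
    funext k
    have : k.val ≠ i := fun h => k.2 (h ▸ hi)
    show (if k.val = i then Multiplicative.ofAdd (1 : ZMod 2) else 1) = 1
    rw [if_neg this]
  -- N ≤ G
  have hNG : N ≤ G := by
    apply Subgroup.normalClosure_le_normal
    rintro _ ⟨i, hi, rfl⟩
    exact hIG i hi
  -- C ≤ G
  have hCG : C ≤ G := by
    rw [show C = (commutator (RACG (Γ.induce Iᶜ))).map ι from rfl,
      Subgroup.map_le_iff_le_comap, show G = (proj.comp ab).ker from rfl,
      MonoidHom.comap_ker]
    exact Abelianization.commutator_subset_ker _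
  -- N ≤ ker ρ
  have hNker : N ≤ ρ.ker := by
    apply Subgroup.normalClosure_le_normal
    rintro _ ⟨i, hi, rfl⟩
    exact MonoidHom.mem_ker.mpr (hρ1 i hi)
  -- key: g * (ι (ρ g))⁻¹ ∈ N for all g
  have key : ∀ g : RACG Γ, g * (ι (ρ g))⁻¹ ∈ N := by
    intro g
    have hg : g ∈ Subgroup.closure (Set.range (PresentedGroup.of : Fin m → RACG Γ)) := by
      rw [PresentedGroup.closure_range_of]; trivial
    refine Subgroup.closure_induction (p := fun x _ => x * (ι (ρ x))⁻¹ ∈ N)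
      ?_ ?_ ?_ ?_ hg
    · rintro _ ⟨i, rfl⟩
      by_cases hi : i ∈ I
      · rw [show (PresentedGroup.of i : RACG Γ) = racgGen Γ i from rfl, hρ1 i hi, map_one,
          inv_one, mul_one]
        exact Subgroup.subset_normalClosure ⟨i, hi, rfl⟩
      · have hi' : i ∈ Iᶜ := hi
        rw [show (PresentedGroup.of i : RACG Γ) = racgGen Γ i from rfl, hρ2 i hi',
          hι ⟨i, hi'⟩, mul_inv_cancel]
        exact N.one_mem
    · simpa using N.one_mem
    · intro x y _ _ hx hy
      have heq : x * y * (ι (ρ (x * y)))⁻¹ =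
          (x * (y * (ι (ρ y))⁻¹) * x⁻¹) * (x * (ι (ρ x))⁻¹) := by
        rw [map_mul, map_mul, mul_inv_rev]
        group
      rw [heq]
      exact N.mul_mem (hNnormal.conj_mem _ hy x) hx
    · intro x _ hx
      have heq : x⁻¹ * (ι (ρ x⁻¹))⁻¹ = x⁻¹ * (x * (ι (ρ x))⁻¹)⁻¹ * (x⁻¹)⁻¹ := by
        rw [map_inv, map_inv]
        group
      rw [heq]
      exact hNnormal.conj_mem _ (N.inv_mem hx) x⁻¹
  -- the factorization proj ∘ ab = (proj ∘ ab ∘ ι) ∘ ρ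
  have hfact : proj.comp ab = ((proj.comp ab).comp ι).comp ρ := by
    apply PresentedGroup.ext
    intro i
    show (proj.comp ab) (racgGen Γ i) = (proj.comp ab) (ι (ρ (racgGen Γ i)))
    by_cases hi : i ∈ I
    · rw [hρ1 i hi, map_one, map_one]
      exact hIG i hi
    · have hi' : i ∈ Iᶜ := hi
      rw [hρ2 i hi', hι ⟨i, hi'⟩]
  -- the mod-2 abelianization of the parabolic
  have habJ : ∀ j : (Iᶜ : Set (Fin m)),
      ((proj.comp ab).comp ι) (racgGen (Γ.induce Iᶜ) j) =
        Pi.mulSingle j (Multiplicative.ofAdd (1 : ZMod 2)) := by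
    intro j
    rw [MonoidHom.comp_apply, hι j, MonoidHom.comp_apply, hab j.val]
    funext k
    show (if k.val = j.val then Multiplicative.ofAdd (1 : ZMod 2) else 1) = _
    by_cases h : k = j
    · rw [if_pos (by rw [h]), h, Pi.mulSingle_eq_same]
    · rw [if_neg (fun hv => h (Subtype.ext hv)), Pi.mulSingle_eq_of_ne h]
  refine ⟨hNG, hCG, ?_, ?_, ?_⟩
  · exact fun g _ n hn => hNnormal.conj_mem n hn g
  · -- N ⊓ C = ⊥
    rw [eq_bot_iff]
    rintro x ⟨hxN, hxC⟩
    obtain ⟨c, hc, rfl⟩ := hxC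
    have hc1 : c = 1 := by
      have := MonoidHom.mem_ker.mp (hNker hxN)
      rwa [hρι c] at this
    rw [hc1, map_one]
    exact Subgroup.mem_bot.mpr rfl
  · -- N * C = G
    apply Set.Subset.antisymm
    · rintro _ ⟨n, hn, c, hc, rfl⟩
      exact G.mul_mem (hNG hn) (hCG hc)
    · intro g hg
      have hgker : ((proj.comp ab).comp ι) (ρ g) = 1 := by
        have h1 : (proj.comp ab) g = 1 := hg
        rw [hfact] at h1
        exact h1
      have hcomm : ρ g ∈ commutator (RACG (Γ.induce Iᶜ)) := by
        haveI : Fintype (Iᶜ : Set (Fin m)) := Fintype.ofFinite _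
        exact racg_ker_le_commutator (Γ.induce Iᶜ) ((proj.comp ab).comp ι) habJ
          (MonoidHom.mem_ker.mpr hgker)
      refine ⟨g * (ι (ρ g))⁻¹, key g, ι (ρ g), ⟨ρ g, hcomm, rfl⟩, by group⟩
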